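/- Let ψ, E, ζ be as in the context with ζ of even order n, fix i, and assume ψ(e_i, e_i) = −1. Then M^{ψ, s_{i,E}(E), ζ} ≡ τ_i(M^{ψ,E,ζ}) (mod n), entrywise. -/

import Mathlib

noncomputable section

namespace MDS

variable {r : ℕ}

/-- `m_{ij}`: the least `m ∈ ℕ` such that `ψ(e_i,e_i)^{m+1} = 1` or
`ψ(e_i,e_i)^m ψ(e_i,e_j) ψ(e_j,e_i) = 1`. -/
def mij (ψ : (Fin r → ℤ) → (Fin r → ℤ) → ℂ) (E : Fin r → Fin r → ℤ) (i j : Fin r) : ℕ :=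
  sInf {m : ℕ |
    ψ (E i) (E i) ^ (m + 1) = 1 ∨ ψ (E i) (E i) ^ m * (ψ (E i) (E j) * ψ (E j) (E i)) = 1}

/-- The reflected ordered basis `s_{i,E}(E)`, with `s_{i,E}(e_i) = -e_i` and
`s_{i,E}(e_j) = e_j + m_{ij} e_i` for `j ≠ i`. -/
def reflectB (ψ : (Fin r → ℤ) → (Fin r → ℤ) → ℂ) (E : Fin r → Fin r → ℤ) (i : Fin r) :
    Fin r → Fin r → ℤ :=
  fun j => if j = i then -(E i) else E j + (mij ψ E i j) • E i

/-- The matrix `M^{ψ,E,ζ}`: off the diagonal, the least `m ≥ 0` with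
`ζ^m = ψ(e_i,e_j)ψ(e_j,e_i)`; on the diagonal, the least `m ≥ 0` with `ζ^m = -ψ(e_i,e_i)`. -/
def Mmat (ψ : (Fin r → ℤ) → (Fin r → ℤ) → ℂ) (E : Fin r → Fin r → ℤ) (ζ : ℂ) :
    Fin r → Fin r → ℕ :=
  fun i j =>
    if i = j then sInf {m : ℕ | ζ ^ m = -(ψ (E i) (E i))}
    else sInf {m : ℕ | ζ ^ m = ψ (E i) (E j) * ψ (E j) (E i)}

/-- The operation `τ_i` on symmetric integer matrices (with `e_{ij} = 1` iff `M_{ij} ≠ 0`):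
`(τ_i M)_{ii} = 0`, `(τ_i M)_{ij} = (τ_i M)_{ji} = -M_{ij}` for `j ≠ i`,
`(τ_i M)_{jj} = M_{jj} + e_{ij}(M_{ij} + n/2)` for `j ≠ i`, and
`(τ_i M)_{hj} = M_{hj} + e_{ih} e_{ij} (M_{ih} + M_{ij})` for `h ≠ j` with `h, j ≠ i`. -/
def tauMat (n : ℕ) (i : Fin r) (M : Fin r → Fin r → ℤ) : Fin r → Fin r → ℤ :=
  fun h j =>
    if h = i ∧ j = i then 0
    else if h = i then -(M i j)
    else if j = i then -(M h i)
    else if h = j then M j j + (if M i j ≠ 0 then 1 else 0) * (M i j + ((n / 2 : ℕ) : ℤ))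
    else M h j + (if M i h ≠ 0 then 1 else 0) * (if M i j ≠ 0 then 1 else 0) * (M i h + M i j)

/-- If two integer powers of `ζ` agree and `ζ` has order `n > 0`, the exponents agree mod `n`. -/
lemma zpow_modEq_of_eq {ζ : ℂ} {n : ℕ} (hζ : orderOf ζ = n) (hn : 0 < n)
    {s t : ℤ} (h : ζ ^ s = ζ ^ t) : s ≡ t [ZMOD (n : ℤ)] := by
  have hone : ζ ^ n = 1 := by rw [← hζ]; exact pow_orderOf_eq_one ζ
  have hne : ζ ≠ 0 := by
    intro h0
    rw [h0, zero_pow hn.ne'] at hone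
    exact zero_ne_one hone
  set u : ℂˣ := Units.mk0 ζ hne with hu
  have huv : u ^ s = u ^ t := by
    ext
    rw [Units.val_zpow_eq_zpow_val, Units.val_zpow_eq_zpow_val]
    exact h
  have hou : orderOf u = n := by rw [← orderOf_units, hu, Units.val_mk0]; exact hζ
  have := zpow_eq_zpow_iff_modEq.mp huv
  rwa [hou] at this

/-- if `ψ(e_i,e_i) = -1`, then `M^{ψ, s_{i,E}(E), ζ} ≡ τ_i(M^{ψ,E,ζ}) (mod n)`,
entrywise. -/
theorem statement_12
    (ψ : (Fin r → ℤ) → (Fin r → ℤ) → ℂ)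
    (hψ1 : ∀ a b c, ψ (a + b) c = ψ a c * ψ b c)
    (hψ2 : ∀ a b c, ψ a (b + c) = ψ a b * ψ a c)
    (hψroot : ∀ a b, ∃ k : ℕ, 0 < k ∧ ψ a b ^ k = 1)
    (E : Module.Basis (Fin r) ℤ (Fin r → ℤ))
    (ζ : ℂ) (n : ℕ) (hζ : orderOf ζ = n) (hneven : Even n) (hnpos : 0 < n)
    (hζall : ∀ a b, ∃ m : ℕ, ψ a b = ζ ^ m)
    (i : Fin r) (hdiag : ψ (E i) (E i) = -1) :
    ∀ h j : Fin r,
      (Mmat ψ (reflectB ψ (fun t => E t) i) ζ h j : ℤ)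
        ≡ tauMat n i (fun a b => (Mmat ψ (fun t => E t) ζ a b : ℤ)) h j [ZMOD (n : ℤ)] := by
  intro h j
  set E₀ : Fin r → Fin r → ℤ := fun t => E t with hE₀
  set F : Fin r → Fin r → ℤ := reflectB ψ E₀ i with hF
  -- basic facts about ζ
  have hone : ζ ^ n = 1 := by rw [← hζ]; exact pow_orderOf_eq_one ζ
  have hζne : ζ ≠ 0 := by
    intro h0
    rw [h0, zero_pow hnpos.ne'] at hone
    exact zero_ne_one hone
  have hn2 : 2 ≤ n := by
    obtain ⟨k, hk⟩ := hneven
    omega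
  have hhalf : ζ ^ (n / 2) = -1 := by
    have hmul : (n / 2) * 2 = n := Nat.div_mul_cancel hneven.two_dvd
    have h2 : ζ ^ (n / 2) * ζ ^ (n / 2) = 1 := by
      rw [← pow_add]
      have : n / 2 + n / 2 = n := by omega
      rw [this, hone]
    have hne1 : ζ ^ (n / 2) ≠ 1 := by
      intro he
      have hd := orderOf_dvd_of_pow_eq_one he
      rw [hζ] at hd
      have h1 : 0 < n / 2 := by omega
      have h3 : n / 2 < n := Nat.div_lt_self hnpos one_lt_two
      have := Nat.le_of_dvd h1 hd
      omega
    rcases mul_self_eq_one_iff.mp h2 with h' | h'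
    · exact absurd h' hne1
    · exact h'
  -- basic facts about ψ
  have hne : ∀ a b, ψ a b ≠ 0 := by
    intro a b h0
    obtain ⟨k, hk, hk1⟩ := hψroot a b
    rw [h0, zero_pow hk.ne'] at hk1
    exact zero_ne_one hk1
  have hzl : ∀ b, ψ 0 b = 1 := by
    intro b
    have h0 := hψ1 0 0 b
    rw [add_zero] at h0
    have h1 : ψ 0 b * 1 = ψ 0 b * ψ 0 b := by rw [mul_one]; exact h0
    exact (mul_left_cancel₀ (hne 0 b) h1).symm
  have hzr : ∀ a, ψ a 0 = 1 := by
    intro a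
    have h0 := hψ2 a 0 0
    rw [add_zero] at h0
    have h1 : ψ a 0 * 1 = ψ a 0 * ψ a 0 := by rw [mul_one]; exact h0
    exact (mul_left_cancel₀ (hne a 0) h1).symm
  have hnegl : ∀ a b, ψ (-a) b = (ψ a b)⁻¹ := by
    intro a b
    have h0 := hψ1 a (-a) b
    rw [add_neg_cancel, hzl] at h0
    exact eq_inv_of_mul_eq_one_right h0.symm
  have hnegr : ∀ a b, ψ a (-b) = (ψ a b)⁻¹ := by
    intro a b
    have h0 := hψ2 a b (-b)
    rw [add_neg_cancel, hzr] at h0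
    exact eq_inv_of_mul_eq_one_right h0.symm
  have hprod : ∀ a b c d, ψ (a + b) (c + d) = ψ a c * ψ a d * (ψ b c * ψ b d) := by
    intro a b c d
    rw [hψ1, hψ2, hψ2]
  have hdiag' : ψ (E₀ i) (E₀ i) = -1 := hdiag
  -- spec of Mmat
  have spec : ∀ (G : Fin r → Fin r → ℤ) (a b : Fin r),
      ζ ^ (Mmat ψ G ζ a b)
        = if a = b then -(ψ (G a) (G a)) else ψ (G a) (G b) * ψ (G b) (G a) := by
    intro G a b
    unfold Mmat
    by_cases hab : a = b
    · simp only [if_pos hab]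
      obtain ⟨m, hm⟩ := hζall (G a) (G a)
      have : (n / 2 + m) ∈ {m : ℕ | ζ ^ m = -(ψ (G a) (G a))} := by
        show ζ ^ (n / 2 + m) = -(ψ (G a) (G a))
        rw [pow_add, hhalf, hm]
        ring
      exact Nat.sInf_mem ⟨_, this⟩
    · simp only [if_neg hab]
      obtain ⟨m1, h1⟩ := hζall (G a) (G b)
      obtain ⟨m2, h2⟩ := hζall (G b) (G a)
      have : (m1 + m2) ∈ {m : ℕ | ζ ^ m = ψ (G a) (G b) * ψ (G b) (G a)} := by
        show ζ ^ (m1 + m2) = _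
        rw [pow_add, h1, h2]
      exact Nat.sInf_mem ⟨_, this⟩
  -- zero criterion for off-diagonal entries in row i
  have hM0 : ∀ b, b ≠ i →
      (Mmat ψ E₀ ζ i b = 0 ↔ ψ (E₀ i) (E₀ b) * ψ (E₀ b) (E₀ i) = 1) := by
    intro b hb
    have hib : i ≠ b := fun hc => hb hc.symm
    constructor
    · intro h0
      have hs := spec E₀ i b
      rw [if_neg hib, h0, pow_zero] at hs
      exact hs.symm
    · intro h1
      unfold Mmat
      rw [if_neg hib]
      apply Nat.sInf_eq_zero.mpr
      left
      show ζ ^ 0 = ψ (E₀ i) (E₀ b) * ψ (E₀ b) (E₀ i)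
      rw [pow_zero]
      exact h1.symm
  -- value of mij
  have hmij : ∀ b, b ≠ i →
      mij ψ E₀ i b = if Mmat ψ E₀ ζ i b = 0 then 0 else 1 := by
    intro b hb
    unfold mij
    by_cases hq : ψ (E₀ i) (E₀ b) * ψ (E₀ b) (E₀ i) = 1
    · rw [if_pos ((hM0 b hb).mpr hq)]
      apply Nat.sInf_eq_zero.mpr
      left
      show ψ (E₀ i) (E₀ i) ^ (0 + 1) = 1 ∨ _
      right
      rw [pow_zero, one_mul]
      exact hq
    · rw [if_neg (fun hc => hq ((hM0 b hb).mp hc))]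
      have h1m : (1 : ℕ) ∈ {m : ℕ |
          ψ (E₀ i) (E₀ i) ^ (m + 1) = 1 ∨
            ψ (E₀ i) (E₀ i) ^ m * (ψ (E₀ i) (E₀ b) * ψ (E₀ b) (E₀ i)) = 1} := by
        left
        rw [hdiag']
        norm_num
      have h0m : (0 : ℕ) ∉ {m : ℕ |
          ψ (E₀ i) (E₀ i) ^ (m + 1) = 1 ∨
            ψ (E₀ i) (E₀ i) ^ m * (ψ (E₀ i) (E₀ b) * ψ (E₀ b) (E₀ i)) = 1} := by
        intro hc
        rcases hc with hc | hc
        · rw [hdiag'] at hc; norm_num at hc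
        · rw [pow_zero, one_mul] at hc; exact hq hc
      apply le_antisymm (Nat.sInf_le h1m)
      by_contra hlt
      push_neg at hlt
      interval_cases hs : sInf {m : ℕ |
          ψ (E₀ i) (E₀ i) ^ (m + 1) = 1 ∨
            ψ (E₀ i) (E₀ i) ^ m * (ψ (E₀ i) (E₀ b) * ψ (E₀ b) (E₀ i)) = 1}
      exact h0m (hs ▸ Nat.sInf_mem ⟨1, h1m⟩)
  -- useful value lemmas
  have hFi : F i = -(E₀ i) := by simp [hF, reflectB]
  have hFoff : ∀ b, b ≠ i → F b = E₀ b + (mij ψ E₀ i b) • E₀ i := by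
    intro b hb
    simp [hF, reflectB, hb]
  have hcast : ∀ a b : Fin r, ((Mmat ψ E₀ ζ a b : ℤ) ≠ 0) ↔ Mmat ψ E₀ ζ a b ≠ 0 := by
    intro a b
    exact_mod_cast Iff.rfl.not
  -- the main case analysis
  by_cases hhi : h = i
  · by_cases hji : j = i
    · -- diagonal (i,i) entry
      have htau : tauMat n i (fun a b => (Mmat ψ E₀ ζ a b : ℤ)) h j = 0 := by
        simp [tauMat, hhi, hji]
      rw [htau]
      apply zpow_modEq_of_eq hζ hnpos
      rw [zpow_natCast, zpow_zero]
      have hs := spec F h j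
      rw [if_pos (hhi.trans hji.symm)] at hs
      rw [hs, hhi, hFi, hnegl, hnegr, hdiag']
      norm_num
    · -- (i, j) with j ≠ i
      have htau : tauMat n i (fun a b => (Mmat ψ E₀ ζ a b : ℤ)) h j
          = -(Mmat ψ E₀ ζ i j : ℤ) := by
        simp [tauMat, hhi, hji]
      rw [htau]
      apply zpow_modEq_of_eq hζ hnpos
      have hhj : h ≠ j := fun hc => hji (hc.symm.trans hhi)
      have hs := spec F h j
      rw [if_neg hhj] at hs
      rw [zpow_natCast, hs, hhi]
      have hq := spec E₀ i j
      rw [if_neg (fun hc => hji hc.symm)] at hq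
      rw [zpow_neg, zpow_natCast, hq]
      by_cases hM : Mmat ψ E₀ ζ i j = 0
      · have hc0 : mij ψ E₀ i j = 0 := by rw [hmij j hji, if_pos hM]
        rw [hFoff j hji, hc0, zero_smul, add_zero, hFi, hnegl, hnegr, ← mul_inv]
      · have hc1 : mij ψ E₀ i j = 1 := by rw [hmij j hji, if_neg hM]
        rw [hFoff j hji, hc1, one_smul, hFi, hψ2, hψ1, hnegl, hnegl, hnegr, hnegr, hdiag']
        rw [mul_inv]
        field_simp
  · by_cases hji : j = i
    · -- (h, i) with h ≠ i
      have htau : tauMat n i (fun a b => (Mmat ψ E₀ ζ a b : ℤ)) h j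
          = -(Mmat ψ E₀ ζ h i : ℤ) := by
        simp [tauMat, hhi, hji]
      rw [htau]
      apply zpow_modEq_of_eq hζ hnpos
      have hhj : h ≠ j := fun hc => hhi (hc.trans hji)
      have hs := spec F h j
      rw [if_neg hhj] at hs
      rw [zpow_natCast, hs, hji]
      have hq := spec E₀ h i
      rw [if_neg hhi] at hq
      rw [zpow_neg, zpow_natCast, hq]
      by_cases hM : Mmat ψ E₀ ζ i h = 0
      · have hc0 : mij ψ E₀ i h = 0 := by rw [hmij h hhi, if_pos hM]
        rw [hFoff h hhi, hc0, zero_smul, add_zero, hFi, hnegl, hnegr]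
        rw [mul_inv]
      · have hc1 : mij ψ E₀ i h = 1 := by rw [hmij h hhi, if_neg hM]
        rw [hFoff h hhi, hc1, one_smul, hFi, hψ1, hψ2, hnegl, hnegl, hnegr, hnegr, hdiag']
        rw [mul_inv]
        field_simp
    · by_cases hhj : h = j
      · -- diagonal (j, j) with j ≠ i
        have hs := spec F j j
        rw [if_pos rfl] at hs
        have hd := spec E₀ j j
        rw [if_pos rfl] at hd
        have hq := spec E₀ i j
        rw [if_neg (fun hc => hji hc.symm)] at hq
        by_cases hM : Mmat ψ E₀ ζ i j = 0
        · have htau : tauMat n i (fun a b => (Mmat ψ E₀ ζ a b : ℤ)) h j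
              = (Mmat ψ E₀ ζ j j : ℤ) := by
            simp [tauMat, hhi, hji, hhj, hM]
          rw [htau]
          apply zpow_modEq_of_eq hζ hnpos
          rw [hhj, zpow_natCast, zpow_natCast, hs, hd]
          have hc0 : mij ψ E₀ i j = 0 := by rw [hmij j hji, if_pos hM]
          rw [hFoff j hji, hc0, zero_smul, add_zero]
        · have hM' : ((Mmat ψ E₀ ζ i j : ℤ)) ≠ 0 := by exact_mod_cast hM
          have htau : tauMat n i (fun a b => (Mmat ψ E₀ ζ a b : ℤ)) h j
              = (Mmat ψ E₀ ζ j j : ℤ) + ((Mmat ψ E₀ ζ i j : ℤ) + ((n / 2 : ℕ) : ℤ)) := by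
            simp [tauMat, hhi, hji, hhj, hM', hM]
          rw [htau]
          apply zpow_modEq_of_eq hζ hnpos
          rw [hhj, zpow_natCast]
          rw [zpow_add₀ hζne, zpow_add₀ hζne, zpow_natCast, zpow_natCast, zpow_natCast,
            hs, hd, hq, hhalf]
          have hc1 : mij ψ E₀ i j = 1 := by rw [hmij j hji, if_neg hM]
          rw [hFoff j hji, hc1, one_smul, hprod, hdiag']
          ring
      · -- off-diagonal (h, j), h, j ≠ i, h ≠ j
        have hs := spec F h j
        rw [if_neg hhj] at hs
        have hqhj := spec E₀ h j
        rw [if_neg hhj] at hqhj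
        have hqih := spec E₀ i h
        rw [if_neg (fun hc => hhi hc.symm)] at hqih
        have hqij := spec E₀ i j
        rw [if_neg (fun hc => hji hc.symm)] at hqij
        by_cases hMa : Mmat ψ E₀ ζ i h = 0 <;> by_cases hMb : Mmat ψ E₀ ζ i j = 0
        · -- a = 0, b = 0
          have htau : tauMat n i (fun a b => (Mmat ψ E₀ ζ a b : ℤ)) h j
              = (Mmat ψ E₀ ζ h j : ℤ) := by
            simp [tauMat, hhi, hji, hhj, hMa, hMb]
          rw [htau]
          apply zpow_modEq_of_eq hζ hnpos
          rw [zpow_natCast, zpow_natCast, hs, hqhj]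
          have ha : mij ψ E₀ i h = 0 := by rw [hmij h hhi, if_pos hMa]
          have hb : mij ψ E₀ i j = 0 := by rw [hmij j hji, if_pos hMb]
          rw [hFoff h hhi, hFoff j hji, ha, hb]
          simp only [zero_smul, add_zero]
        · -- a = 0, b = 1
          have htau : tauMat n i (fun a b => (Mmat ψ E₀ ζ a b : ℤ)) h j
              = (Mmat ψ E₀ ζ h j : ℤ) := by
            simp [tauMat, hhi, hji, hhj, hMa]
          rw [htau]
          apply zpow_modEq_of_eq hζ hnpos
          rw [zpow_natCast, zpow_natCast, hs, hqhj]
          have ha : mij ψ E₀ i h = 0 := by rw [hmij h hhi, if_pos hMa]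
          have hb : mij ψ E₀ i j = 1 := by rw [hmij j hji, if_neg hMb]
          rw [hFoff h hhi, hFoff j hji, ha, hb]
          simp only [zero_smul, add_zero, one_smul]
          rw [hψ2, hψ1]
          have h1 := (hM0 h hhi).mp hMa
          calc ψ (E₀ h) (E₀ j) * ψ (E₀ h) (E₀ i) * (ψ (E₀ j) (E₀ h) * ψ (E₀ i) (E₀ h))
              = (ψ (E₀ h) (E₀ j) * ψ (E₀ j) (E₀ h))
                * (ψ (E₀ i) (E₀ h) * ψ (E₀ h) (E₀ i)) := by ring
            _ = ψ (E₀ h) (E₀ j) * ψ (E₀ j) (E₀ h) := by rw [h1, mul_one]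
        · -- a = 1, b = 0
          have htau : tauMat n i (fun a b => (Mmat ψ E₀ ζ a b : ℤ)) h j
              = (Mmat ψ E₀ ζ h j : ℤ) := by
            simp [tauMat, hhi, hji, hhj, hMb]
          rw [htau]
          apply zpow_modEq_of_eq hζ hnpos
          rw [zpow_natCast, zpow_natCast, hs, hqhj]
          have ha : mij ψ E₀ i h = 1 := by rw [hmij h hhi, if_neg hMa]
          have hb : mij ψ E₀ i j = 0 := by rw [hmij j hji, if_pos hMb]
          rw [hFoff h hhi, hFoff j hji, ha, hb]
          simp only [zero_smul, add_zero, one_smul]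
          rw [hψ1, hψ2]
          have h1 := (hM0 j hji).mp hMb
          calc ψ (E₀ h) (E₀ j) * ψ (E₀ i) (E₀ j) * (ψ (E₀ j) (E₀ h) * ψ (E₀ j) (E₀ i))
              = (ψ (E₀ h) (E₀ j) * ψ (E₀ j) (E₀ h))
                * (ψ (E₀ i) (E₀ j) * ψ (E₀ j) (E₀ i)) := by ring
            _ = ψ (E₀ h) (E₀ j) * ψ (E₀ j) (E₀ h) := by rw [h1, mul_one]
        · -- a = 1, b = 1
          have hMa' : ((Mmat ψ E₀ ζ i h : ℤ)) ≠ 0 := by exact_mod_cast hMa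
          have hMb' : ((Mmat ψ E₀ ζ i j : ℤ)) ≠ 0 := by exact_mod_cast hMb
          have htau : tauMat n i (fun a b => (Mmat ψ E₀ ζ a b : ℤ)) h j
              = (Mmat ψ E₀ ζ h j : ℤ) + ((Mmat ψ E₀ ζ i h : ℤ) + (Mmat ψ E₀ ζ i j : ℤ)) := by
            simp [tauMat, hhi, hji, hhj, hMa', hMb', hMa, hMb]
          rw [htau]
          apply zpow_modEq_of_eq hζ hnpos
          rw [zpow_natCast]
          rw [zpow_add₀ hζne, zpow_add₀ hζne, zpow_natCast, zpow_natCast, zpow_natCast,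
            hs, hqhj, hqih, hqij]
          have ha : mij ψ E₀ i h = 1 := by rw [hmij h hhi, if_neg hMa]
          have hb : mij ψ E₀ i j = 1 := by rw [hmij j hji, if_neg hMb]
          rw [hFoff h hhi, hFoff j hji, ha, hb]
          simp only [one_smul]
          rw [hprod, hprod, hdiag']
          ring

end MDS
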